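/- Let Ω ⊂ ℝⁿ (n ≥ 1) be a bounded, open, connected set, and let V be the set of all functions v : cl(Ω) → ℝ that are restrictions to cl(Ω) of continuously differentiable functions on ℝⁿ and vanish on ∂Ω. Let Φ ∈ V be twice continuously differentiable on Ω with ΔΦ = −1 on Ω and Φ not identically zero, and assume the Green identity ∫_Ω ∇v·∇Φ dx = ∫_Ω v dx holds for every v ∈ V. Then ∫_Ω Φ dx = ∫_Ω |∇Φ|² dx > 0, and every v ∈ V with ∫_Ω v dx = 1 satisfies ∫_Ω |∇v|² dx ≥ 1/∫_Ω Φ dx, with equality if and only if v = Φ/∫_Ω Φ dx on cl(Ω). -/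

import Mathlib

open MeasureTheory Set RealInnerProductSpace

noncomputable def lapl {n : ℕ} (f : EuclideanSpace ℝ (Fin n) → ℝ)
    (x : EuclideanSpace ℝ (Fin n)) : ℝ :=
  ∑ i : Fin n, fderiv ℝ (fun y => fderiv ℝ f y (EuclideanSpace.single i 1)) x
      (EuclideanSpace.single i 1)

/-- Membership in V: restriction to cl(Ω) of a C¹ function on ℝⁿ vanishing on ∂Ω. -/
def memV {n : ℕ} (Ω : Set (EuclideanSpace ℝ (Fin n)))
    (v : EuclideanSpace ℝ (Fin n) → ℝ) : Prop :=
  ContDiff ℝ 1 v ∧ ∀ x ∈ frontier Ω, v x = 0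

section Aux

variable {n : ℕ} {Ω : Set (EuclideanSpace ℝ (Fin n))}

lemma aux_integrableOn {f : EuclideanSpace ℝ (Fin n) → ℝ}
    (hf : Continuous f) (hΩb : Bornology.IsBounded Ω) : IntegrableOn f Ω :=
  (hf.continuousOn.integrableOn_compact hΩb.isCompact_closure).mono_set subset_closure

lemma aux_cont_grad {f : EuclideanSpace ℝ (Fin n) → ℝ} (hf : ContDiff ℝ 1 f) :
    Continuous (gradient f) :=
  (InnerProductSpace.toDual ℝ (EuclideanSpace ℝ (Fin n))).symm.continuous.comp
    (hf.continuous_fderiv one_ne_zero)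

lemma aux_fderiv_of_grad {f : EuclideanSpace ℝ (Fin n) → ℝ} {x}
    (h : gradient f x = 0) : fderiv ℝ f x = 0 :=
  (InnerProductSpace.toDual ℝ (EuclideanSpace ℝ (Fin n))).symm.injective
    (by simpa [gradient] using h)

lemma aux_eq_zero_on {g : EuclideanSpace ℝ (Fin n) → ℝ} (hg : Continuous g)
    (hnn : ∀ x, 0 ≤ g x) (hΩo : IsOpen Ω) (hΩb : Bornology.IsBounded Ω)
    (hint : ∫ x in Ω, g x = 0) : ∀ x ∈ Ω, g x = 0 := by
  have hi := aux_integrableOn hg hΩb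
  have h1 : g =ᵐ[volume.restrict Ω] 0 :=
    (setIntegral_eq_zero_iff_of_nonneg_ae (Filter.Eventually.of_forall hnn) hi).1 hint
  exact Measure.eqOn_open_of_ae_eq h1 hΩo hg.continuousOn continuousOn_const

lemma aux_locally_const {f : EuclideanSpace ℝ (Fin n) → ℝ} (hΩo : IsOpen Ω)
    (hd : Differentiable ℝ f) (h0 : ∀ x ∈ Ω, fderiv ℝ f x = 0)
    {z : EuclideanSpace ℝ (Fin n)} (hz : z ∈ Ω) :
    ∃ ε > 0, Metric.ball z ε ⊆ Ω ∧ ∀ u ∈ Metric.ball z ε, f u = f z := by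
  obtain ⟨ε, hε, hball⟩ := Metric.isOpen_iff.1 hΩo z hz
  refine ⟨ε, hε, hball, fun u hu => ?_⟩
  exact (convex_ball z ε).is_const_of_fderivWithin_eq_zero hd.differentiableOn
    (fun w hw => by rw [fderivWithin_of_isOpen Metric.isOpen_ball hw]; exact h0 w (hball hw))
    hu (Metric.mem_ball_self hε)

lemma aux_const_on {f : EuclideanSpace ℝ (Fin n) → ℝ} (hΩo : IsOpen Ω)
    (hΩc : IsPreconnected Ω) (hd : Differentiable ℝ f) (h0 : ∀ x ∈ Ω, fderiv ℝ f x = 0)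
    {x y : EuclideanSpace ℝ (Fin n)} (hx : x ∈ Ω) (hy : y ∈ Ω) : f x = f y := by
  by_contra hne
  have hSo : IsOpen {z ∈ Ω | f z = f x} := by
    rw [Metric.isOpen_iff]
    rintro z ⟨hzΩ, hzf⟩
    obtain ⟨ε, hε, hball, hc⟩ := aux_locally_const hΩo hd h0 hzΩ
    exact ⟨ε, hε, fun u hu => ⟨hball hu, (hc u hu).trans hzf⟩⟩
  have hTo : IsOpen {z ∈ Ω | f z ≠ f x} := by
    rw [Metric.isOpen_iff]
    rintro z ⟨hzΩ, hzf⟩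
    obtain ⟨ε, hε, hball, hc⟩ := aux_locally_const hΩo hd h0 hzΩ
    exact ⟨ε, hε, fun u hu => ⟨hball hu, (hc u hu).symm ▸ hzf⟩⟩
  obtain ⟨p, -, ⟨-, hp1⟩, -, hp2⟩ := hΩc _ _ hSo hTo
    (fun z hz => by by_cases h : f z = f x; exacts [Or.inl ⟨hz, h⟩, Or.inr ⟨hz, h⟩])
    ⟨x, hx, hx, rfl⟩ ⟨y, hy, hy, fun h => hne h.symm⟩
  exact hp2 hp1

lemma aux_frontier_ne (hn : 1 ≤ n) (hΩb : Bornology.IsBounded Ω)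
    (hne : Ω.Nonempty) : (frontier Ω).Nonempty := by
  rw [nonempty_iff_ne_empty]
  intro h
  haveI : Nonempty (Fin n) := ⟨⟨0, hn⟩⟩
  rcases isClopen_iff.1 (isClopen_iff_frontier_eq_empty.2 h) with h1 | h1
  · exact hne.ne_empty h1
  · exact NormedSpace.unbounded_univ ℝ (EuclideanSpace ℝ (Fin n)) (h1 ▸ hΩb)

end Aux

/-- Among C¹ functions of unit mass vanishing on ∂Ω, the Dirichlet integral is
minimized exactly by Φ/∫_Ω Φ, where −ΔΦ = 1 in Ω, Φ = 0 on ∂Ω, with minimum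
value 1/∫_Ω Φ. -/
theorem stmt_17 {n : ℕ} (hn : 1 ≤ n) {Ω : Set (EuclideanSpace ℝ (Fin n))}
    (hΩo : IsOpen Ω) (hΩb : Bornology.IsBounded Ω) (hΩc : IsConnected Ω)
    {Φ : EuclideanSpace ℝ (Fin n) → ℝ} (hΦV : memV Ω Φ)
    (hΦ2 : ContDiffOn ℝ 2 Φ Ω) (hΦeq : ∀ x ∈ Ω, lapl Φ x = -1)
    (hΦne : ∃ x ∈ closure Ω, Φ x ≠ 0)
    (hGreen : ∀ v : EuclideanSpace ℝ (Fin n) → ℝ, memV Ω v →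
      (∫ x in Ω, ⟪gradient v x, gradient Φ x⟫) = ∫ x in Ω, v x) :
    (∫ x in Ω, Φ x) = (∫ x in Ω, ‖gradient Φ x‖ ^ 2) ∧
    0 < (∫ x in Ω, Φ x) ∧
    ∀ v : EuclideanSpace ℝ (Fin n) → ℝ, memV Ω v → (∫ x in Ω, v x) = 1 →
      (1 / ∫ x in Ω, Φ x) ≤ (∫ x in Ω, ‖gradient v x‖ ^ 2) ∧
      ((∫ x in Ω, ‖gradient v x‖ ^ 2) = 1 / ∫ x in Ω, Φ x ↔
        ∀ x ∈ closure Ω, v x = Φ x / ∫ y in Ω, Φ y) := by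
  obtain ⟨hΦC, hΦfr⟩ := hΦV
  have hΩne : Ω.Nonempty := hΩc.nonempty
  have hdΦ : Differentiable ℝ Φ := hΦC.differentiable one_ne_zero
  have hgΦ : Continuous (gradient Φ) := aux_cont_grad hΦC
  set c := ∫ x in Ω, Φ x with hc
  -- Step A : c = ∫ ‖∇Φ‖²
  have hA : c = ∫ x in Ω, ‖gradient Φ x‖ ^ 2 := by
    rw [hc, ← hGreen Φ ⟨hΦC, hΦfr⟩]
    simp only [real_inner_self_eq_norm_sq]
  -- Step B : 0 < c
  have hnn : 0 ≤ ∫ x in Ω, ‖gradient Φ x‖ ^ 2 :=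
    setIntegral_nonneg hΩo.measurableSet fun x _ => sq_nonneg _
  have hcpos : 0 < c := by
    rcases (hA ▸ hnn).lt_or_eq with h | h
    · exact h
    · exfalso
      have hz : ∀ x ∈ Ω, ‖gradient Φ x‖ ^ 2 = 0 :=
        aux_eq_zero_on (hgΦ.norm.pow 2) (fun x => sq_nonneg _) hΩo hΩb (hA ▸ h.symm)
      have hfd : ∀ x ∈ Ω, fderiv ℝ Φ x = 0 := fun x hx =>
        aux_fderiv_of_grad (norm_eq_zero.1 (pow_eq_zero_iff two_ne_zero |>.1 (hz x hx)))
      obtain ⟨x0, hx0⟩ := hΩne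
      have hlap : lapl Φ x0 = 0 := by
        unfold lapl
        refine Finset.sum_eq_zero fun i _ => ?_
        have hev : (fun y => fderiv ℝ Φ y (EuclideanSpace.single i 1)) =ᶠ[nhds x0]
            fun _ => (0 : ℝ) :=
          Filter.eventuallyEq_of_mem (hΩo.mem_nhds hx0) fun y hy => by
            rw [hfd y hy]; rfl
        rw [hev.fderiv_eq, fderiv_const_apply]
        rfl
      rw [hΦeq x0 hx0] at hlap
      norm_num at hlap
  refine ⟨hA, hcpos, fun v hvV hv1 => ?_⟩
  obtain ⟨hvC, hvfr⟩ := hvV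
  have hdv : Differentiable ℝ v := hvC.differentiable one_ne_zero
  have hgv : Continuous (gradient v) := aux_cont_grad hvC
  -- the difference w
  set w : EuclideanSpace ℝ (Fin n) → ℝ := fun x => v x - c⁻¹ * Φ x with hw
  have hwC : ContDiff ℝ 1 w := hvC.sub (contDiff_const.mul hΦC)
  have hdw : Differentiable ℝ w := hwC.differentiable one_ne_zero
  have hgwc : Continuous (gradient w) := aux_cont_grad hwC
  have hwfr : ∀ x ∈ frontier Ω, w x = 0 := fun x hx => by
    simp [hw, hvfr x hx, hΦfr x hx]
  have hgw : ∀ x, gradient w x = gradient v x - c⁻¹ • gradient Φ x := by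
    intro x
    have hfd : fderiv ℝ w x = fderiv ℝ v x - c⁻¹ • fderiv ℝ Φ x := by
      rw [hw]
      rw [fderiv_fun_sub (hdv x) ((hdΦ x).const_mul c⁻¹), fderiv_const_mul (hdΦ x)]
    simp [gradient, hfd]
  -- ∫ w = 0
  have hIv : IntegrableOn v Ω := aux_integrableOn hvC.continuous hΩb
  have hIΦ : IntegrableOn Φ Ω := aux_integrableOn hΦC.continuous hΩb
  have hintw : ∫ x in Ω, w x = 0 := by
    rw [hw]
    rw [integral_sub hIv (hIΦ.const_mul c⁻¹), integral_const_mul _ _, hv1, ← hc]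
    field_simp
    norm_num
  have hGw0 : ∫ x in Ω, ⟪gradient w x, gradient Φ x⟫ = 0 := by
    rw [hGreen w ⟨hwC, hwfr⟩, hintw]
  -- integrability of the three pieces
  have hi1 : IntegrableOn (fun x => ‖gradient w x‖ ^ 2) Ω :=
    aux_integrableOn (hgwc.norm.pow 2) hΩb
  have hi12 : IntegrableOn (fun x => ‖gradient w x‖ ^ 2
      + 2 * (c⁻¹ * ⟪gradient w x, gradient Φ x⟫)) Ω :=
    aux_integrableOn ((hgwc.norm.pow 2).add
      (continuous_const.mul (continuous_const.mul (hgwc.inner hgΦ)))) hΩb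
  have hi2 : IntegrableOn (fun x => 2 * (c⁻¹ * ⟪gradient w x, gradient Φ x⟫)) Ω :=
    aux_integrableOn (continuous_const.mul (continuous_const.mul (hgwc.inner hgΦ))) hΩb
  have hi3 : IntegrableOn (fun x => (c⁻¹) ^ 2 * ‖gradient Φ x‖ ^ 2) Ω :=
    aux_integrableOn (continuous_const.mul (hgΦ.norm.pow 2)) hΩb
  -- key expansion
  have key : (∫ x in Ω, ‖gradient v x‖ ^ 2)
      = (∫ x in Ω, ‖gradient w x‖ ^ 2) + 1 / c := by
    have hpt : ∀ x, ‖gradient v x‖ ^ 2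
        = ‖gradient w x‖ ^ 2 + 2 * (c⁻¹ * ⟪gradient w x, gradient Φ x⟫)
          + (c⁻¹) ^ 2 * ‖gradient Φ x‖ ^ 2 := by
      intro x
      have h1 : gradient v x = gradient w x + c⁻¹ • gradient Φ x := by
        rw [hgw x]; abel
      rw [h1, norm_add_sq_real, real_inner_smul_right, norm_smul, mul_pow,
        Real.norm_eq_abs, sq_abs]
    simp only [hpt]
    rw [integral_add hi12 hi3, integral_add hi1 hi2, integral_const_mul _ _,
      integral_const_mul _ _, integral_const_mul _ _, hGw0, ← hA]
    field_simp
    ring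
  -- nonnegativity of ∫‖∇w‖²
  have hwnn : 0 ≤ ∫ x in Ω, ‖gradient w x‖ ^ 2 :=
    setIntegral_nonneg hΩo.measurableSet fun x _ => sq_nonneg _
  constructor
  · rw [key]; linarith
  constructor
  · -- equality → v = Φ/c on closure
    intro heq
    have hw0 : ∫ x in Ω, ‖gradient w x‖ ^ 2 = 0 := by linarith [key ▸ heq]
    have hz : ∀ x ∈ Ω, ‖gradient w x‖ ^ 2 = 0 :=
      aux_eq_zero_on (hgwc.norm.pow 2) (fun x => sq_nonneg _) hΩo hΩb hw0
    have hfw : ∀ x ∈ Ω, fderiv ℝ w x = 0 := fun x hx =>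
      aux_fderiv_of_grad (norm_eq_zero.1 (pow_eq_zero_iff two_ne_zero |>.1 (hz x hx)))
    obtain ⟨z, hz'⟩ := aux_frontier_ne hn hΩb hΩne
    obtain ⟨x₀, hx₀⟩ := hΩne
    have hEq : EqOn w (fun _ => w x₀) Ω := fun a ha =>
      aux_const_on hΩo hΩc.isPreconnected hdw hfw ha hx₀
    have hcl : EqOn w (fun _ => w x₀) (closure Ω) :=
      hEq.closure hwC.continuous continuous_const
    have hx₀0 : w x₀ = 0 := (hcl (frontier_subset_closure hz')).symm.trans (hwfr z hz')
    intro x hx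
    have hwx : w x = 0 := (hcl hx).trans hx₀0
    rw [hw] at hwx
    simp only [sub_eq_zero] at hwx
    rw [hwx, div_eq_inv_mul]
  · -- v = Φ/c on closure → equality
    intro h
    have hgve : ∀ x ∈ Ω, gradient v x = c⁻¹ • gradient Φ x := by
      intro x hx
      have hev : v =ᶠ[nhds x] fun y => c⁻¹ * Φ y :=
        Filter.eventuallyEq_of_mem (hΩo.mem_nhds hx) fun y hy => by
          rw [h y (subset_closure hy), div_eq_inv_mul]
      have hfd : fderiv ℝ v x = c⁻¹ • fderiv ℝ Φ x := by
        rw [hev.fderiv_eq, fderiv_const_mul (hdΦ x)]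
      simp [gradient, hfd]
    have : (∫ x in Ω, ‖gradient v x‖ ^ 2)
        = ∫ x in Ω, (c⁻¹) ^ 2 * ‖gradient Φ x‖ ^ 2 :=
      setIntegral_congr_fun hΩo.measurableSet fun x hx => by
        rw [hgve x hx, norm_smul, mul_pow, Real.norm_eq_abs, sq_abs]
    rw [this, integral_const_mul _ _, ← hA]
    field_simp
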